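/- Every finite game (finitely many players, each with a finite nonempty action set, and real-valued utility functions) admits a correlated equilibrium, i.e., a probability distribution P over the joint action space such that for every player c and every pair of actions a_c, ã_c of player c, the sum over opponent profiles A_{-c} of P(a_c, A_{-c})·[U_c(a_c, A_{-c}) − U_c(ã_c, A_{-c})] is nonnegative. -/

import Mathlib

open Finset Function Filter

private lemma exists_stationary_stochastic {α : Type} [Fintype α] [Nonempty α] [DecidableEq α]
    (Q : α → α → ℝ) (hQ0 : ∀ x y, 0 ≤ Q x y) (hQ1 : ∀ x, ∑ y, Q x y = 1) :
    ∃ μ : α → ℝ, (∀ x, 0 ≤ μ x) ∧ (∑ x, μ x = 1) ∧ ∀ y, ∑ x, μ x * Q x y = μ y := by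
  classical
  set step : (α → ℝ) → (α → ℝ) := fun v y => ∑ x, v x * Q x y with hstep
  set v : ℕ → α → ℝ := fun n => step^[n] (fun _ => (Fintype.card α : ℝ)⁻¹) with hv
  have hcard : (0:ℝ) < Fintype.card α := by exact_mod_cast Fintype.card_pos
  have hvprop : ∀ n, (∀ x, 0 ≤ v n x) ∧ (∑ x, v n x = 1) := by
    intro n
    induction n with
    | zero =>
      constructor
      · intro x; simp only [hv, Function.iterate_zero, id]; positivity
      · simp only [hv, Function.iterate_zero, id, Finset.sum_const, card_univ, nsmul_eq_mul]
        field_simp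
    | succ n ih =>
      have h1 : v (n+1) = step (v n) := by
        simp only [hv, Function.iterate_succ_apply']
      constructor
      · intro x; rw [h1]
        exact Finset.sum_nonneg fun z _ => mul_nonneg (ih.1 z) (hQ0 z x)
      · rw [h1]
        simp only [hstep]
        rw [Finset.sum_comm]
        simp_rw [← Finset.mul_sum, hQ1, mul_one]
        exact ih.2
  have hvle : ∀ n x, v n x ≤ 1 := by
    intro n x
    calc v n x ≤ ∑ y, v n y := Finset.single_le_sum (fun y _ => (hvprop n).1 y) (mem_univ x)
    _ = 1 := (hvprop n).2
  have hstepv : ∀ k y, ∑ x, v k x * Q x y = v (k+1) y := by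
    intro k y
    simp only [hv, Function.iterate_succ_apply']
    rfl
  set c : ℕ → α → ℝ := fun n y => (∑ k ∈ Finset.range (n+1), v k y) / (n+1) with hc
  have hcmem : ∀ n, c n ∈ stdSimplex ℝ α := by
    intro n
    constructor
    · intro x
      apply div_nonneg
      · exact Finset.sum_nonneg fun k _ => (hvprop k).1 x
      · positivity
    · simp only [hc]
      rw [← Finset.sum_div, Finset.sum_comm]
      rw [Finset.sum_congr rfl (fun k _ => (hvprop k).2)]
      simp only [Finset.sum_const, Finset.card_range, nsmul_eq_mul, Nat.cast_add, Nat.cast_one,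
        mul_one]
      field_simp
  obtain ⟨μ, hμmem, φ, hφ, hconv⟩ := (isCompact_stdSimplex ℝ α).tendsto_subseq hcmem
  refine ⟨μ, hμmem.1, hμmem.2, ?_⟩
  intro y
  set F : (α → ℝ) → ℝ := fun w => (∑ x, w x * Q x y) - w y with hF
  have hFcont : Continuous F := by
    apply Continuous.sub
    · exact continuous_finset_sum _ fun x _ => (continuous_apply x).mul continuous_const
    · exact continuous_apply y
  have hFc : ∀ n, F (c n) = (v (n+1) y - v 0 y) / (n+1) := by
    intro n
    have key : ∑ x, (∑ k ∈ Finset.range (n+1), v k x) * Q x y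
        = (∑ k ∈ Finset.range (n+1), v k y) + v (n+1) y - v 0 y := by
      simp_rw [Finset.sum_mul]
      rw [Finset.sum_comm]
      rw [Finset.sum_congr rfl (fun k _ => hstepv k y)]
      have h1 : ∑ k ∈ Finset.range (n+1), v (k+1) y
          = (∑ k ∈ Finset.range n, v (k+1) y) + v (n+1) y := Finset.sum_range_succ _ n
      have h2 : ∑ k ∈ Finset.range (n+1), v k y
          = (∑ k ∈ Finset.range n, v (k+1) y) + v 0 y := Finset.sum_range_succ' _ n
      rw [h1]
      linarith
    simp only [hF, hc]
    simp_rw [div_mul_eq_mul_div]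
    rw [← Finset.sum_div, key, ← sub_div]
    ring_nf
  have hbound : ∀ n, ‖F (c n)‖ ≤ 2 / (n+1) := by
    intro n
    rw [hFc n, Real.norm_eq_abs, abs_div]
    have hn : |((n:ℝ)+1)| = (n:ℝ)+1 := abs_of_pos (by positivity)
    rw [hn]
    have a1 := (hvprop (n+1)).1 y
    have a2 := hvle (n+1) y
    have b1 := (hvprop 0).1 y
    have b2 := hvle 0 y
    have habs : |v (n+1) y - v 0 y| ≤ 2 := by
      rw [abs_le]; constructor <;> linarith
    gcongr
  have h2 : Tendsto (fun n : ℕ => (2:ℝ) / (n+1)) atTop (nhds 0) := by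
    have h := tendsto_one_div_add_atTop_nhds_zero_nat (𝕜 := ℝ)
    have := h.const_mul (2:ℝ)
    simpa [div_eq_mul_inv, mul_comm, mul_assoc, mul_left_comm] using this
  have hF0 : Tendsto (fun n => F (c n)) atTop (nhds 0) := squeeze_zero_norm hbound h2
  have hFμ : Tendsto (fun n => F (c (φ n))) atTop (nhds (F μ)) := (hFcont.tendsto μ).comp hconv
  have hF0' : Tendsto (fun n => F (c (φ n))) atTop (nhds 0) := hF0.comp hφ.tendsto_atTop
  have hFeq : F μ = 0 := tendsto_nhds_unique hFμ hF0'
  have h := hFeq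
  simp only [hF, sub_eq_zero] at h
  exact h

private lemma exists_stationary_nonneg {α : Type} [Fintype α] [Nonempty α] [DecidableEq α]
    (L : α → α → ℝ) (hL : ∀ x y, 0 ≤ L x y) :
    ∃ μ : α → ℝ, (∀ x, 0 ≤ μ x) ∧ (∑ x, μ x = 1) ∧
      ∀ y, ∑ x, μ x * L x y = μ y * ∑ z, L y z := by
  classical
  set M : ℝ := (∑ x, ∑ z, L x z) + 1 with hM
  have hMpos : 0 < M := by
    have : 0 ≤ ∑ x, ∑ z, L x z :=
      Finset.sum_nonneg fun x _ => Finset.sum_nonneg fun z _ => hL x z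
    linarith
  have hrow : ∀ x, ∑ z, L x z ≤ M := by
    intro x
    have h1 : ∑ z, L x z ≤ ∑ x, ∑ z, L x z :=
      Finset.single_le_sum (fun x _ => Finset.sum_nonneg fun z _ => hL x z) (mem_univ x)
    linarith
  set Q : α → α → ℝ := fun x y => L x y / M + (if x = y then 1 - (∑ z, L x z) / M else 0) with hQ
  have hQ0 : ∀ x y, 0 ≤ Q x y := by
    intro x y
    have h1 : 0 ≤ L x y / M := div_nonneg (hL x y) hMpos.le
    by_cases h : x = y
    · have : (∑ z, L x z) / M ≤ 1 := by
        rw [div_le_one hMpos]; exact hrow x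
      subst h
      simp only [hQ, eq_self_iff_true, if_true]
      linarith
    · simp only [hQ, if_neg h, add_zero]; exact h1
  have hQ1 : ∀ x, ∑ y, Q x y = 1 := by
    intro x
    simp only [hQ]
    rw [Finset.sum_add_distrib, Finset.sum_ite_eq Finset.univ x
      (fun _ => 1 - (∑ z, L x z) / M)]
    simp only [mem_univ, if_pos]
    rw [← Finset.sum_div]
    ring
  obtain ⟨μ, hμ0, hμ1, hμs⟩ := exists_stationary_stochastic Q hQ0 hQ1
  refine ⟨μ, hμ0, hμ1, ?_⟩
  intro y
  have h := hμs y
  simp only [hQ] at h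
  rw [Finset.sum_congr rfl (fun x _ => mul_add (μ x) _ _), Finset.sum_add_distrib] at h
  have h2 : ∑ x, μ x * (if x = y then 1 - (∑ z, L x z) / M else 0)
      = μ y * (1 - (∑ z, L y z) / M) := by
    simp [mul_ite, Finset.sum_ite_eq']
  rw [h2] at h
  have h3 : ∑ x, μ x * (L x y / M) = (∑ x, μ x * L x y) / M := by
    simp_rw [← mul_div_assoc]
    rw [Finset.sum_div]
  rw [h3] at h
  have hMne : M ≠ 0 := hMpos.ne'
  field_simp at h
  linarith

/-- Every finite game admits a correlated equilibrium. -/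
theorem finite_game_has_correlated_equilibrium
    {ι : Type} [Fintype ι] [DecidableEq ι]
    (A : ι → Type) [∀ i, Fintype (A i)] [∀ i, Nonempty (A i)]
    [∀ i, DecidableEq (A i)]
    (U : ι → (∀ i, A i) → ℝ) :
    ∃ P : (∀ i, A i) → ℝ,
      (∀ a, 0 ≤ P a) ∧ (∑ a, P a = 1) ∧
      ∀ (c : ι) (ac ac' : A c),
        0 ≤ ∑ a : (∀ i, A i),
          (if a c = ac then P a * (U c a - U c (Function.update a c ac')) else 0) := by
  classical
  set G : (∀ i, A i) → (Σ c : ι, A c × A c) → ℝ :=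
    fun a t => if a t.1 = t.2.1 then U t.1 a - U t.1 (Function.update a t.1 t.2.2) else 0 with hG
  suffices h : ∃ P : (∀ i, A i) → ℝ, (∀ a, 0 ≤ P a) ∧ (∑ a, P a = 1) ∧
      ∀ t, 0 ≤ ∑ a, P a * G a t by
    obtain ⟨P, h0, h1, h2⟩ := h
    refine ⟨P, h0, h1, fun c ac ac' => ?_⟩
    have h3 := h2 ⟨c, (ac, ac')⟩
    simpa only [hG, mul_ite, mul_zero] using h3
  set Φ : ((∀ i, A i) → ℝ) → ((Σ c : ι, A c × A c) → ℝ) :=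
    fun P t => ∑ a, P a * G a t with hΦ
  by_cases hyes : ∃ P ∈ stdSimplex ℝ (∀ i, A i), ∀ t, 0 ≤ Φ P t
  · obtain ⟨P, hPmem, hPt⟩ := hyes
    exact ⟨P, hPmem.1, hPmem.2, hPt⟩
  exfalso
  set K : Set ((Σ c : ι, A c × A c) → ℝ) := Φ '' (stdSimplex ℝ (∀ i, A i)) with hK
  set O : Set ((Σ c : ι, A c × A c) → ℝ) := {v | ∀ t, 0 ≤ v t} with hO
  have hΦlin : IsLinearMap ℝ Φ := by
    constructor
    · intro P P'
      funext t
      simp only [hΦ, Pi.add_apply, add_mul, Finset.sum_add_distrib]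
    · intro r P
      funext t
      simp only [hΦ, Pi.smul_apply, smul_eq_mul, Finset.mul_sum, mul_assoc]
  have hKconv : Convex ℝ K := (convex_stdSimplex ℝ _).is_linear_image hΦlin
  have hΦcont : Continuous Φ :=
    continuous_pi fun t => continuous_finset_sum _ fun a _ =>
      (continuous_apply a).mul continuous_const
  have hKcomp : IsCompact K := (isCompact_stdSimplex ℝ _).image hΦcont
  have hOconv : Convex ℝ O := by
    intro x hx y hy s r hs hr _
    intro t
    have h1 := hx t
    have h2 := hy t
    simp only [Pi.add_apply, Pi.smul_apply, smul_eq_mul]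
    have := add_nonneg (mul_nonneg hs h1) (mul_nonneg hr h2)
    exact this
  have hOclosed : IsClosed O := by
    have heq : O = ⋂ t, {v : (Σ c : ι, A c × A c) → ℝ | 0 ≤ v t} := by
      ext v; simp [hO, Set.mem_iInter]
    rw [heq]
    exact isClosed_iInter fun t => isClosed_le continuous_const (continuous_apply t)
  have hdisj : Disjoint K O := by
    rw [Set.disjoint_left]
    rintro x ⟨P, hPmem, rfl⟩ hxO
    exact hyes ⟨P, hPmem, hxO⟩
  obtain ⟨f, u, w, hfu, huw, hfw⟩ :=
    geometric_hahn_banach_compact_closed hKconv hKcomp hOconv hOclosed hdisj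
  have hw0 : w < 0 := by
    have h0O : (0 : (Σ c : ι, A c × A c) → ℝ) ∈ O := fun t => le_refl 0
    have := hfw 0 h0O
    simpa using this
  set lam : (Σ c : ι, A c × A c) → ℝ := fun t => f (Pi.single (M := fun _ : (Σ c : ι, A c × A c) => ℝ) t 1) with hlam
  have hlam0 : ∀ t, 0 ≤ lam t := by
    intro t
    by_contra hneg
    push_neg at hneg
    have hrpos : 0 < w / lam t := div_pos_of_neg_of_neg hw0 hneg
    have hmem : (w / lam t) • Pi.single (M := fun _ : (Σ c : ι, A c × A c) => ℝ) t 1 ∈ O := by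
      intro s
      simp only [Pi.smul_apply, smul_eq_mul]
      by_cases h : s = t
      · subst h
        rw [Pi.single_eq_same]
        positivity
      · rw [Pi.single_eq_of_ne h]
        simp
    have hlt := hfw _ hmem
    rw [map_smul] at hlt
    simp only [smul_eq_mul] at hlt
    rw [div_mul_cancel₀ _ (ne_of_lt hneg)] at hlt
    exact lt_irrefl w hlt
  have hfrepr : ∀ x : (Σ c : ι, A c × A c) → ℝ, f x = ∑ t, x t * lam t := by
    intro x
    conv_lhs => rw [← Finset.univ_sum_single x]
    rw [map_sum]
    refine Finset.sum_congr rfl fun t _ => ?_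
    have hsingle : Pi.single (M := fun _ : (Σ c : ι, A c × A c) => ℝ) t (x t)
        = x t • Pi.single (M := fun _ : (Σ c : ι, A c × A c) => ℝ) t 1 := by
      rw [← Pi.single_smul, smul_eq_mul, mul_one]
    rw [hsingle, map_smul, smul_eq_mul, hlam]
  have hGK : ∀ a, f (G a) < u := by
    intro a
    apply hfu
    refine ⟨fun a' => if a' = a then 1 else 0, ⟨fun a' => by dsimp only; split <;> norm_num, by simp⟩, ?_⟩
    funext t
    simp [hΦ, ite_mul, Finset.sum_ite_eq']
  have hexists : ∀ c : ι, ∃ μ : A c → ℝ, (∀ x, 0 ≤ μ x) ∧ (∑ x, μ x = 1) ∧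
      ∀ y, ∑ x, μ x * lam ⟨c, (x, y)⟩ = μ y * ∑ z, lam ⟨c, (y, z)⟩ :=
    fun c => exists_stationary_nonneg (fun x y => lam ⟨c, (x, y)⟩) (fun x y => hlam0 _)
  choose μ hμ0 hμ1 hμs using hexists
  set P : (∀ i, A i) → ℝ := fun a => ∏ i, μ i (a i) with hP
  have hP0 : ∀ a, 0 ≤ P a := fun a => Finset.prod_nonneg fun i _ => hμ0 i (a i)
  have hP1 : ∑ a, P a = 1 := by
    simp only [hP]
    rw [← Fintype.prod_sum]
    simp [hμ1]
  -- key per-player identity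
  have hkey : ∀ c : ι,
      ∑ p : A c × A c, ∑ a, P a * (G a ⟨c, p⟩ * lam ⟨c, p⟩) = 0 := by
    intro c
    rw [Fintype.sum_prod_type]
    simp only [hG, ite_mul, zero_mul, mul_ite, mul_zero]
    rw [Finset.sum_comm]
    have hcollapse : ∀ y : A c, (∑ x : A c, ∑ a : (∀ i, A i),
          if a c = x then P a * ((U c a - U c (Function.update a c y)) * lam ⟨c, (x, y)⟩) else 0)
        = ∑ a : (∀ i, A i),
          P a * ((U c a - U c (Function.update a c y)) * lam ⟨c, (a c, y)⟩) := by
      intro y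
      rw [Finset.sum_comm]
      refine Finset.sum_congr rfl fun a _ => ?_
      rw [Finset.sum_ite_eq]
      simp
    rw [Finset.sum_congr rfl fun y _ => hcollapse y]
    have hsub : ∀ (y : A c) (a : ∀ i, A i),
        P a * ((U c a - U c (Function.update a c y)) * lam ⟨c, (a c, y)⟩)
        = P a * (U c a * lam ⟨c, (a c, y)⟩)
          - P a * (U c (Function.update a c y) * lam ⟨c, (a c, y)⟩) := by
      intro y a; ring
    simp only [hsub]
    rw [Finset.sum_congr rfl fun y (_ : y ∈ univ) => Finset.sum_sub_distrib _ _,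
      Finset.sum_sub_distrib, sub_eq_zero]
    -- A = B
    rw [Finset.sum_comm]
    conv_rhs => rw [Finset.sum_comm]
    -- B : reindex by involution
    have hB : ∀ a : (∀ i, A i), ∀ y : A c,
        True := fun _ _ => trivial
    set g : ((∀ i, A i) × A c) → ℝ :=
      fun p => P p.1 * (U c (Function.update p.1 c p.2) * lam ⟨c, (p.1 c, p.2)⟩) with hg
    have hinv : ∀ p : ((∀ i, A i) × A c),
        (fun p : ((∀ i, A i) × A c) => (Function.update p.1 c p.2, p.1 c))
          ((Function.update p.1 c p.2, p.1 c)) = p := by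
      rintro ⟨a, y⟩
      simp only [Prod.mk.injEq]
      constructor
      · rw [Function.update_idem, Function.update_eq_self]
      · rw [Function.update_self]
    set e : ((∀ i, A i) × A c) ≃ ((∀ i, A i) × A c) :=
      ⟨fun p => (Function.update p.1 c p.2, p.1 c),
       fun p => (Function.update p.1 c p.2, p.1 c), hinv, hinv⟩ with he
    have hBsum : (∑ a : (∀ i, A i), ∑ y : A c,
          P a * (U c (Function.update a c y) * lam ⟨c, (a c, y)⟩))
        = ∑ a : (∀ i, A i), ∑ y : A c,
          P (Function.update a c y) * (U c a * lam ⟨c, (y, a c)⟩) := by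
      calc (∑ a : (∀ i, A i), ∑ y : A c,
            P a * (U c (Function.update a c y) * lam ⟨c, (a c, y)⟩))
          = ∑ p : ((∀ i, A i) × A c), g p := (Fintype.sum_prod_type (f := g)).symm
        _ = ∑ p : ((∀ i, A i) × A c), g (e p) := (Equiv.sum_comp e g).symm
        _ = ∑ a : (∀ i, A i), ∑ y : A c, g (e (a, y)) :=
            Fintype.sum_prod_type (f := fun p => g (e p))
        _ = ∑ a : (∀ i, A i), ∑ y : A c,
            P (Function.update a c y) * (U c a * lam ⟨c, (y, a c)⟩) := by
            refine Finset.sum_congr rfl fun a _ => Finset.sum_congr rfl fun y _ => ?_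
            simp only [he, hg, Equiv.coe_fn_mk]
            rw [Function.update_idem, Function.update_eq_self, Function.update_self]
    rw [hBsum]
    refine Finset.sum_congr rfl fun a _ => ?_
    have hsplit : P a = μ c (a c) * ∏ i ∈ {c}ᶜ, μ i (a i) :=
      Fintype.prod_eq_mul_prod_compl c _
    have hsplit' : ∀ y, P (Function.update a c y) = μ c y * ∏ i ∈ {c}ᶜ, μ i (a i) := by
      intro y
      simp only [hP]
      rw [Fintype.prod_eq_mul_prod_compl c, Function.update_self]
      congr 1
      refine Finset.prod_congr rfl fun i hi => ?_
      rw [Function.update_of_ne (by simpa using hi)]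
    have hA1 : (∑ y : A c, P a * (U c a * lam ⟨c, (a c, y)⟩))
        = P a * U c a * ∑ y, lam ⟨c, (a c, y)⟩ := by
      rw [Finset.mul_sum]
      exact Finset.sum_congr rfl fun y _ => by ring
    have hB1 : (∑ y : A c, P (Function.update a c y) * (U c a * lam ⟨c, (y, a c)⟩))
        = ((∏ i ∈ {c}ᶜ, μ i (a i)) * U c a) * ∑ y, μ c y * lam ⟨c, (y, a c)⟩ := by
      rw [Finset.mul_sum]
      refine Finset.sum_congr rfl fun y _ => ?_
      rw [hsplit' y]
      ring
    rw [hA1, hB1, hμs c (a c), hsplit]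
    ring
  -- total expectation is zero
  have htotal : ∑ a, P a * f (G a) = 0 := by
    calc ∑ a, P a * f (G a) = ∑ a, ∑ t, P a * (G a t * lam t) := by
          refine Finset.sum_congr rfl fun a _ => ?_
          rw [hfrepr (G a), Finset.mul_sum]
      _ = ∑ t : (Σ c : ι, A c × A c), ∑ a, P a * (G a t * lam t) := Finset.sum_comm
      _ = ∑ c : ι, ∑ p : A c × A c, ∑ a, P a * (G a ⟨c, p⟩ * lam ⟨c, p⟩) := by
          rw [← Finset.univ_sigma_univ, Finset.sum_sigma]
      _ = 0 := by
          rw [Finset.sum_congr rfl fun c _ => hkey c]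
          simp
  have hub : ∑ a, P a * f (G a) ≤ u := by
    calc ∑ a, P a * f (G a) ≤ ∑ a, P a * u :=
          Finset.sum_le_sum fun a _ => mul_le_mul_of_nonneg_left (hGK a).le (hP0 a)
      _ = u := by rw [← Finset.sum_mul, hP1, one_mul]
  rw [htotal] at hub
  linarith
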